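/- Characterization of slice constant functions: assume D ∩ ℝ = ∅ and D⁺ = D ∩ {z : Im z > 0} is nonempty and connected. Fix J ∈ 𝕊. A slice function g : Ω_D → ℍ is slice constant (i.e. its inducing stem function is locally constant on D) if and only if there exist quaternions q₊, q₋ ∈ ℍ such that g(α + Iβ) = (1 + I·J)·q₊ + (1 − I·J)·q₋ for all α + iβ ∈ D with β > 0 and all I ∈ 𝕊. -/

import Mathlib

private lemma constOn {F : ℂ → Quaternion ℝ} {D S : Set ℂ} (hS : IsPreconnected S)
    (hSD : S ⊆ D)
    (h : ∀ z ∈ D, ∃ U : Set ℂ, IsOpen U ∧ z ∈ U ∧ ∀ w ∈ U ∩ D, F w = F z) :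
    ∀ x ∈ S, ∀ y ∈ S, F x = F y := by
  have hf : IsLocallyConstant (fun x : D => F x) := by
    rw [IsLocallyConstant.iff_exists_open]
    rintro ⟨x, hx⟩
    obtain ⟨U, hU, hxU, hUc⟩ := h x hx
    exact ⟨Subtype.val ⁻¹' U, hU.preimage continuous_subtype_val, hxU,
      fun ⟨y, hy⟩ hyU => hUc y ⟨hyU, hy⟩⟩
  intro x hx y hy
  have hS' : IsPreconnected ((Subtype.val : D → ℂ) ⁻¹' S) := by
    rw [← Topology.IsInducing.subtypeVal.isPreconnected_image]
    rw [Subtype.image_preimage_coe]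
    rwa [Set.inter_eq_right.mpr hSD]
  exact hf.apply_eq_of_isPreconnected hS' (x := ⟨x, hSD hx⟩) (y := ⟨y, hSD hy⟩) hx hy

private lemma quat_expand (I J a b : Quaternion ℝ) :
    (1 + I * J) * (a - J * b) + (1 - I * J) * (a + J * b)
      = a + a - I * (J * J) * b - I * (J * J) * b := by
  noncomm_ring

theorem slice_constant_characterization
    (D : Set ℂ) (hDopen : IsOpen D)
    (hDsymm : ∀ z ∈ D, (starRingEnd ℂ) z ∈ D)
    (hDreal : ∀ z ∈ D, z.im ≠ 0)
    (hDplus : IsConnected (D ∩ {z : ℂ | 0 < z.im}))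
    (J : Quaternion ℝ) (hJ : J ^ 2 = -1)
    (F₁ F₂ : ℂ → Quaternion ℝ)
    (hstem : ∀ z ∈ D,
      F₁ ((starRingEnd ℂ) z) = F₁ z ∧ F₂ ((starRingEnd ℂ) z) = - F₂ z)
    (g : Quaternion ℝ → Quaternion ℝ)
    (hslice : ∀ z ∈ D, ∀ I : Quaternion ℝ, I ^ 2 = -1 →
      g ((z.re : Quaternion ℝ) + I * (z.im : Quaternion ℝ)) = F₁ z + I * F₂ z) :
    ((∀ z ∈ D, ∃ U : Set ℂ, IsOpen U ∧ z ∈ U ∧ ∀ w ∈ U ∩ D, F₁ w = F₁ z) ∧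
     (∀ z ∈ D, ∃ U : Set ℂ, IsOpen U ∧ z ∈ U ∧ ∀ w ∈ U ∩ D, F₂ w = F₂ z))
    ↔
    (∃ qp qm : Quaternion ℝ, ∀ z ∈ D, 0 < z.im → ∀ I : Quaternion ℝ, I ^ 2 = -1 →
      g ((z.re : Quaternion ℝ) + I * (z.im : Quaternion ℝ))
        = (1 + I * J) * qp + (1 - I * J) * qm) := by
  have hJJ : J * J = -1 := by rw [← sq]; exact hJ
  constructor
  · rintro ⟨h1, h2⟩
    obtain ⟨⟨z₀, hz₀⟩, hconn⟩ := hDplus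
    set a := F₁ z₀ with ha
    set b := F₂ z₀ with hb
    refine ⟨(2⁻¹ : ℝ) • (a - J * b), (2⁻¹ : ℝ) • (a + J * b), ?_⟩
    intro z hz him I hI
    have hzS : z ∈ D ∩ {w : ℂ | 0 < w.im} := ⟨hz, him⟩
    have ha' : F₁ z = a := constOn hconn Set.inter_subset_left h1 z hzS z₀ hz₀
    have hb' : F₂ z = b := constOn hconn Set.inter_subset_left h2 z hzS z₀ hz₀
    rw [hslice z hz I hI, ha', hb', mul_smul_comm, mul_smul_comm, ← smul_add,
      quat_expand, hJJ]
    simp only [mul_neg_one, neg_mul, sub_neg_eq_add]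
    module
  · rintro ⟨qp, qm, hq⟩
    have hmJ : (-J) ^ 2 = -1 := by rw [neg_sq]; exact hJ
    have key : ∀ z ∈ D, 0 < z.im →
        F₁ z = qp + qm ∧ F₂ z = -(J * (qm - qp)) := by
      intro z hz him
      have A : F₁ z + J * F₂ z = (1 + J * J) * qp + (1 - J * J) * qm :=
        (hslice z hz J hJ).symm.trans (hq z hz him J hJ)
      have B : F₁ z + (-J) * F₂ z = (1 + (-J) * J) * qp + (1 - (-J) * J) * qm :=
        (hslice z hz (-J) hmJ).symm.trans (hq z hz him (-J) hmJ)
      rw [hJJ] at A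
      simp only [neg_mul, hJJ, neg_neg] at B
      have A' : F₁ z + J * F₂ z = qm + qm := by rw [A]; noncomm_ring
      have B' : F₁ z - J * F₂ z = qp + qp := by
        rw [show F₁ z - J * F₂ z = F₁ z + -(J * F₂ z) by noncomm_ring, B]; noncomm_ring
      have h1 : (2 : Quaternion ℝ) * F₁ z = 2 * (qp + qm) := by
        calc (2 : Quaternion ℝ) * F₁ z
            = (F₁ z + J * F₂ z) + (F₁ z - J * F₂ z) := by noncomm_ring
          _ = (qm + qm) + (qp + qp) := by rw [A', B']
          _ = 2 * (qp + qm) := by noncomm_ring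
      have h2 : (2 : Quaternion ℝ) * (J * F₂ z) = 2 * (qm - qp) := by
        calc (2 : Quaternion ℝ) * (J * F₂ z)
            = (F₁ z + J * F₂ z) - (F₁ z - J * F₂ z) := by noncomm_ring
          _ = (qm + qm) - (qp + qp) := by rw [A', B']
          _ = 2 * (qm - qp) := by noncomm_ring
      have h2ne : (2 : Quaternion ℝ) ≠ 0 := by
        have : ((2 : ℝ) : Quaternion ℝ) ≠ ((0 : ℝ) : Quaternion ℝ) :=
          fun h => two_ne_zero (Quaternion.coe_injective h)
        exact_mod_cast this
      have hF1 : F₁ z = qp + qm := mul_left_cancel₀ h2ne h1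
      have hJF2 : J * F₂ z = qm - qp := mul_left_cancel₀ h2ne h2
      have hF2 : F₂ z = -(J * (qm - qp)) := by
        rw [← hJF2, ← mul_assoc, hJJ]; noncomm_ring
      exact ⟨hF1, hF2⟩
    have keyneg : ∀ z ∈ D, z.im < 0 →
        F₁ z = qp + qm ∧ F₂ z = -(-(J * (qm - qp))) := by
      intro z hz him
      have hcz : (starRingEnd ℂ) z ∈ D := hDsymm z hz
      have hcim : 0 < ((starRingEnd ℂ) z).im := by
        simp only [Complex.conj_im]; linarith
      obtain ⟨k1, k2⟩ := key _ hcz hcim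
      obtain ⟨s1, s2⟩ := hstem z hz
      constructor
      · rw [← s1, k1]
      · rw [k2] at s2
        rw [s2, neg_neg]
    constructor
    · intro z hz
      refine ⟨Set.univ, isOpen_univ, trivial, ?_⟩
      intro w hw
      have hz' : F₁ z = qp + qm := by
        rcases (hDreal z hz).lt_or_gt with h | h
        · exact (keyneg z hz h).1
        · exact (key z hz h).1
      have hw' : F₁ w = qp + qm := by
        rcases (hDreal w hw.2).lt_or_gt with h | h
        · exact (keyneg w hw.2 h).1
        · exact (key w hw.2 h).1
      rw [hz', hw']
    · intro z hz
      rcases (hDreal z hz).lt_or_gt with h | h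
      · refine ⟨{w : ℂ | w.im < 0}, isOpen_lt Complex.continuous_im continuous_const,
          h, ?_⟩
        intro w hw
        rw [(keyneg w hw.2 hw.1).2, (keyneg z hz h).2]
      · refine ⟨{w : ℂ | 0 < w.im}, isOpen_lt continuous_const Complex.continuous_im,
          h, ?_⟩
        intro w hw
        rw [(key w hw.2 hw.1).2, (key z hz h).2]
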